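/- arXiv:2512.11523 — 2 statements merged into one kernel-verified Lean document; each statement's English description precedes it below -/
import Mathlib

section
/- Let (Ω, Σ, μ) be a measure space, N ≥ 1, k > 0, and let f₁,…,f_N : Ω → ℂ be measurable, square-integrable functions that are orthonormal: ∫_Ω f_i \overline{f_j} dμ = δ_{ij}. Let C > 0 and let v : [0,1] × Ω → ℝ satisfy: v(0,·) ≡ 0; x ↦ v(t,x) is measurable for each t; |v(t,x) − v(s,x)| ≤ C|t − s| for all x ∈ Ω and t,s ∈ [0,1]; and t ↦ v(t,x) is convex on [0,1] for each x. Let v̇(x) := lim_{t→0⁺} v(t,x)/t (which exists by convexity and the Lipschitz bound, and satisfies |v̇(x)| ≤ C), and assume v̇ is measurable. For t ∈ [0,1] let H(t) be the N×N complex matrix with entries H(t)_{ij} = ∫_Ω f_i \overline{f_j} e^{−k v(t,·)} dμ. Then each H(t) is Hermitian positive definite (so det H(t) is a positive real number), H(0) is the identity matrix, and the right derivative at t = 0 of t ↦ log det H(t) exists and equals −k ∫_Ω v̇(x) ( Σ_{j=1}^N |f_j(x)|² ) dμ(x). -/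
open MeasureTheory Filter Topology
open scoped ComplexConjugate ComplexOrder

/-- Variational formula for the weighted Gram matrix along a Lipschitz convex path of
weights: the matrices `H t` with entries `∫ fᵢ conj fⱼ e^{−k v(t,·)} dμ` are Hermitian
positive definite with positive real determinant, `H 0 = 1`, and the right derivative of
`t ↦ log det H t` at `t = 0` exists and equals `−k ∫ v̇ (∑ⱼ |fⱼ|²) dμ`. -/
theorem stmt5 {Ω : Type*} [MeasurableSpace Ω] (μ : Measure Ω)
    (N : ℕ) (hN : 1 ≤ N) (k : ℝ) (hk : 0 < k)
    (f : Fin N → Ω → ℂ)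
    (hfm : ∀ j, Measurable (f j)) (hfL2 : ∀ j, MemLp (f j) 2 μ)
    (horth : ∀ i j, (∫ x, f i x * conj (f j x) ∂μ) = if i = j then 1 else 0)
    (C : ℝ) (hC : 0 < C) (v : ℝ → Ω → ℝ)
    (hv0 : ∀ x, v 0 x = 0)
    (hvm : ∀ t, Measurable (v t))
    (hvLip : ∀ x, ∀ t ∈ Set.Icc (0:ℝ) 1, ∀ s ∈ Set.Icc (0:ℝ) 1,
      |v t x - v s x| ≤ C * |t - s|)
    (hvconv : ∀ x, ConvexOn ℝ (Set.Icc (0:ℝ) 1) (fun t => v t x))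
    (vdot : Ω → ℝ) (hvdotm : Measurable vdot)
    (hvdot : ∀ x, Tendsto (fun t => v t x / t) (𝓝[>] 0) (𝓝 (vdot x)))
    (H : ℝ → Matrix (Fin N) (Fin N) ℂ)
    (hH : ∀ t i j, H t i j
        = ∫ x, f i x * conj (f j x) * (Real.exp (-(k * v t x)) : ℂ) ∂μ) :
    (∀ t ∈ Set.Icc (0:ℝ) 1, (H t).PosDef ∧ (H t).det.im = 0 ∧ 0 < (H t).det.re) ∧
    H 0 = 1 ∧
    HasDerivWithinAt (fun t => Real.log ((H t).det.re))
      (-k * ∫ x, vdot x * ∑ j, ‖f j x‖ ^ 2 ∂μ) (Set.Ici 0) 0 := by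
  have hconj : ∀ j, Measurable fun x => conj (f j x) :=
    fun j => Complex.continuous_conj.measurable.comp (hfm j)
  -- bound |v t x| ≤ C * t
  have hvb : ∀ x, ∀ t ∈ Set.Icc (0:ℝ) 1, |v t x| ≤ C * t := by
    intro x t ht
    have := hvLip x t ht 0 (Set.left_mem_Icc.2 zero_le_one)
    simpa [hv0 x, abs_of_nonneg ht.1] using this
  -- |vdot x| ≤ C
  have hvdotb : ∀ x, |vdot x| ≤ C := by
    intro x
    refine le_of_tendsto (hvdot x).abs ?_
    filter_upwards [Ioc_mem_nhdsGT_of_mem ⟨le_refl (0:ℝ), zero_lt_one⟩] with t ht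
    rw [abs_div, abs_of_pos ht.1, div_le_iff₀ ht.1]
    exact hvb x t ⟨ht.1.le, ht.2⟩
  -- integrability of products
  have hsq : ∀ j, Integrable (fun x => ‖f j x‖ ^ 2) μ :=
    fun j => (memLp_two_iff_integrable_sq_norm (hfm j).aestronglyMeasurable).1 (hfL2 j)
  have hff : ∀ i j, Integrable (fun x => f i x * conj (f j x)) μ := by
    intro i j
    refine Integrable.mono' (((hsq i).add (hsq j)).div_const 2)
      (((hfm i).mul (hconj j)).aestronglyMeasurable) ?_
    filter_upwards with x
    rw [norm_mul, RCLike.norm_conj]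
    simp only [Pi.add_apply, Pi.div_apply]
    nlinarith [sq_nonneg (‖f i x‖ - ‖f j x‖), norm_nonneg (f i x), norm_nonneg (f j x)]
  have hkey : ∀ (w : Ω → ℝ), Measurable w → ∀ (B : ℝ), (∀ x, |w x| ≤ B) → ∀ i j,
      Integrable (fun x => f i x * conj (f j x) * (w x : ℂ)) μ := by
    intro w hw B hB i j
    have h := (hff i j).bdd_mul (c := B)
      (Complex.continuous_ofReal.measurable.comp hw).aestronglyMeasurable
      (Eventually.of_forall (fun x => by simpa using hB x))
    exact h.congr (Eventually.of_forall fun x => by simp only [Function.comp_apply]; ring)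
  -- the weight functions
  have hwm : ∀ t, Measurable fun x => Real.exp (-(k * v t x)) :=
    fun t => Real.continuous_exp.measurable.comp ((hvm t).const_mul k).neg
  have hwB : ∀ t ∈ Set.Icc (0:ℝ) 1, ∀ x, |Real.exp (-(k * v t x))| ≤ Real.exp (k * C) := by
    intro t ht x
    rw [abs_of_pos (Real.exp_pos _), Real.exp_le_exp]
    have h1 : |v t x| ≤ C * t := hvb x t ht
    have h2 : -(k * v t x) ≤ k * |v t x| := by
      rw [neg_mul_eq_mul_neg]
      exact mul_le_mul_of_nonneg_left (neg_le_abs _) hk.le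
    calc -(k * v t x) ≤ k * |v t x| := h2
      _ ≤ k * (C * t) := by gcongr
      _ ≤ k * C := by nlinarith [mul_nonneg (mul_pos hk hC).le (sub_nonneg.2 ht.2)]
  have hHint : ∀ t ∈ Set.Icc (0:ℝ) 1, ∀ i j,
      Integrable (fun x => f i x * conj (f j x) * ((Real.exp (-(k * v t x)) : ℝ) : ℂ)) μ :=
    fun t ht i j => hkey _ (hwm t) _ (hwB t ht) i j
  -- H 0 = 1
  have hH0 : H 0 = 1 := by
    ext i j
    rw [hH]
    simp only [hv0, mul_zero, neg_zero, Real.exp_zero, Complex.ofReal_one, mul_one]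
    rw [horth, Matrix.one_apply]
  -- expansion of the quadratic form
  have hexpand : ∀ (w : Ω → ℝ), Measurable w → ∀ (B : ℝ), (∀ x, |w x| ≤ B) →
      ∀ c : Fin N → ℂ,
      (∑ i, ∑ j, conj (c i) * c j * ∫ x, f i x * conj (f j x) * (w x : ℂ) ∂μ)
        = ((∫ x, ‖∑ i, conj (c i) * f i x‖ ^ 2 * w x ∂μ : ℝ) : ℂ) := by
    intro w hw B hB c
    have hint : ∀ i j, Integrable
        (fun x => conj (c i) * c j * (f i x * conj (f j x) * (w x : ℂ))) μ :=
      fun i j => (hkey w hw B hB i j).const_mul _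
    have h1 : ∀ i j, conj (c i) * c j * ∫ x, f i x * conj (f j x) * (w x : ℂ) ∂μ
        = ∫ x, conj (c i) * c j * (f i x * conj (f j x) * (w x : ℂ)) ∂μ :=
      fun i j => (integral_const_mul _ _).symm
    simp_rw [h1]
    have h2 : ∀ i, (∑ j, ∫ x, conj (c i) * c j * (f i x * conj (f j x) * (w x : ℂ)) ∂μ)
        = ∫ x, ∑ j, conj (c i) * c j * (f i x * conj (f j x) * (w x : ℂ)) ∂μ :=
      fun i => (integral_finset_sum _ (fun j _ => hint i j)).symm
    simp_rw [h2]
    rw [← integral_finset_sum _ (fun i _ => integrable_finset_sum _ (fun j _ => hint i j))]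
    refine Eq.trans (integral_congr_ae (Eventually.of_forall fun x => ?_)) integral_ofReal
    show (∑ i, ∑ j, conj (c i) * c j * (f i x * conj (f j x) * ((w x : ℝ) : ℂ)))
        = ((‖∑ i, conj (c i) * f i x‖ ^ 2 * w x : ℝ) : ℂ)
    have hg : ((‖∑ i, conj (c i) * f i x‖ ^ 2 : ℝ) : ℂ)
        = (∑ i, conj (c i) * f i x) * conj (∑ i, conj (c i) * f i x) := by
      rw [Complex.mul_conj]; norm_cast
      simp [Complex.normSq_eq_norm_sq]
    rw [Complex.ofReal_mul, hg, map_sum]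
    simp only [map_mul, Complex.conj_conj]
    rw [Finset.sum_mul_sum, Finset.sum_mul]
    refine Finset.sum_congr rfl fun i _ => ?_
    rw [Finset.sum_mul]
    refine Finset.sum_congr rfl fun j _ => ?_
    ring
  -- orthonormality of linear combinations
  have horthg : ∀ c : Fin N → ℂ,
      (∫ x, ‖∑ i, conj (c i) * f i x‖ ^ 2 ∂μ) = ∑ i, ‖c i‖ ^ 2 := by
    intro c
    have h := hexpand (fun _ => 1) measurable_const 1 (by norm_num) c
    simp only [Complex.ofReal_one, mul_one] at h
    simp only [horth, mul_ite, mul_one, mul_zero, Finset.sum_ite_eq, Finset.mem_univ,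
      if_true] at h
    have h2 : ((∑ i, ‖c i‖ ^ 2 : ℝ) : ℂ)
        = ((∫ x, ‖∑ i, conj (c i) * f i x‖ ^ 2 ∂μ : ℝ) : ℂ) := by
      rw [← h]
      push_cast
      refine Finset.sum_congr rfl fun i _ => ?_
      rw [mul_comm, Complex.mul_conj]
      norm_cast
      simp [Complex.normSq_eq_norm_sq]
    exact (Complex.ofReal_inj.1 h2).symm
  -- positive definiteness
  have hpos : ∀ t ∈ Set.Icc (0:ℝ) 1, (H t).PosDef := by
    intro t ht
    refine Matrix.PosDef.of_dotProduct_mulVec_pos ?_ ?_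
    · show (H t).conjTranspose = H t
      ext i j
      rw [Matrix.conjTranspose_apply, RCLike.star_def, hH, hH, ← integral_conj]
      refine integral_congr_ae (Eventually.of_forall fun x => ?_)
      simp only [map_mul, Complex.conj_conj, Complex.conj_ofReal]
      ring
    · intro c hc
      have hquad : dotProduct (star c) (Matrix.mulVec (H t) c)
          = ∑ i, ∑ j, conj (c i) * c j *
              ∫ x, f i x * conj (f j x) * ((Real.exp (-(k * v t x)) : ℝ) : ℂ) ∂μ := by
        simp only [dotProduct, Matrix.mulVec, Pi.star_apply, RCLike.star_def]
        refine Finset.sum_congr rfl fun i _ => ?_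
        rw [Finset.mul_sum]
        refine Finset.sum_congr rfl fun j _ => ?_
        rw [hH]
        ring
      rw [hquad, hexpand _ (hwm t) _ (hwB t ht) c, Complex.zero_lt_real]
      -- positivity of the real integral
      set g : Ω → ℂ := fun x => ∑ i, conj (c i) * f i x with hgdef
      have hgL2 : MemLp g 2 μ := by
        apply memLp_finset_sum
        intro i _
        exact (hfL2 i).const_mul (conj (c i))
      have hgm : AEStronglyMeasurable g μ := by
        apply Finset.aestronglyMeasurable_fun_sum
        intro i _
        exact (measurable_const.mul (hfm i)).aestronglyMeasurable
      have hgsq : Integrable (fun x => ‖g x‖ ^ 2) μ :=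
        (memLp_two_iff_integrable_sq_norm hgm).1 hgL2
      have hint2 : Integrable (fun x => ‖g x‖ ^ 2 * Real.exp (-(k * v t x))) μ := by
        have h := hgsq.bdd_mul (c := Real.exp (k * C))
          (hwm t).aestronglyMeasurable
          (Eventually.of_forall fun x => by
            simpa [Real.norm_eq_abs] using hwB t ht x)
        exact h.congr (Eventually.of_forall fun x => by ring)
      have hmono : (∫ x, ‖g x‖ ^ 2 * Real.exp (-(k * C)) ∂μ)
          ≤ ∫ x, ‖g x‖ ^ 2 * Real.exp (-(k * v t x)) ∂μ := by
        refine integral_mono (hgsq.mul_const _) hint2 fun x => ?_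
        have h1 : -(k * C) ≤ -(k * v t x) := by
          have h2 : v t x ≤ C := le_trans (le_abs_self _)
            (le_trans (hvb x t ht) (by nlinarith [ht.2]))
          nlinarith
        exact mul_le_mul_of_nonneg_left (Real.exp_le_exp.2 h1) (sq_nonneg _)
      have hgval : (∫ x, ‖g x‖ ^ 2 ∂μ) = ∑ i, ‖c i‖ ^ 2 := horthg c
      have hcpos : 0 < ∑ i, ‖c i‖ ^ 2 := by
        have : ∃ i, c i ≠ 0 := by
          by_contra hcon
          push_neg at hcon
          exact hc (funext hcon)
        obtain ⟨i, hi⟩ := this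
        exact Finset.sum_pos' (fun j _ => sq_nonneg _)
          ⟨i, Finset.mem_univ i, pow_pos (norm_pos_iff.2 hi) 2⟩
      calc (0:ℝ) < (∑ i, ‖c i‖ ^ 2) * Real.exp (-(k * C)) :=
            mul_pos hcpos (Real.exp_pos _)
        _ = ∫ x, ‖g x‖ ^ 2 * Real.exp (-(k * C)) ∂μ := by
            rw [integral_mul_const, hgval]
        _ ≤ _ := hmono
  -- entrywise derivatives
  set D : Fin N → Fin N → ℂ :=
    fun i j => ∫ x, f i x * conj (f j x) * ((-(k * vdot x) : ℝ) : ℂ) ∂μ with hDdef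
  set δ : ℝ := min 1 (k * C)⁻¹ with hδdef
  have hδpos : 0 < δ := lt_min zero_lt_one (inv_pos.2 (mul_pos hk hC))
  have hmem : Set.Ioc (0:ℝ) δ ∈ 𝓝[>] (0:ℝ) := Ioc_mem_nhdsGT_of_mem ⟨le_refl _, hδpos⟩
  have hsmall : ∀ t ∈ Set.Ioc (0:ℝ) δ, ∀ x, |(-(k * v t x))| ≤ 1 := by
    intro t ht x
    have ht1 : t ≤ 1 := le_trans ht.2 (min_le_left _ _)
    have ht2 : t ≤ (k * C)⁻¹ := le_trans ht.2 (min_le_right _ _)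
    rw [abs_neg, abs_mul, abs_of_pos hk]
    calc k * |v t x| ≤ k * (C * t) := by
          have := hvb x t ⟨ht.1.le, ht1⟩
          gcongr
      _ ≤ k * (C * (k * C)⁻¹) := by gcongr
      _ = k * C * (k * C)⁻¹ := by ring
      _ = 1 := mul_inv_cancel₀ (mul_pos hk hC).ne'
  have hderiv_entry : ∀ i j, HasDerivWithinAt (fun t => H t i j) (D i j) (Set.Ici 0) 0 := by
    intro i j
    rw [hasDerivWithinAt_iff_tendsto_slope, Set.Ici_sdiff_left]
    have hDCT : Tendsto (fun t : ℝ =>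
        ∫ x, f i x * conj (f j x) * (((Real.exp (-(k * v t x)) - 1) / t : ℝ) : ℂ) ∂μ)
        (𝓝[>] (0:ℝ)) (𝓝 (D i j)) := by
      apply tendsto_integral_filter_of_dominated_convergence
        (bound := fun x => 2 * (k * C) * (‖f i x‖ * ‖f j x‖))
      · filter_upwards with t
        exact (((hfm i).mul (hconj j)).mul (Complex.measurable_ofReal.comp
          (((Real.measurable_exp.comp ((hvm t).const_mul k).neg).sub
            measurable_const).div_const t))).aestronglyMeasurable
      · filter_upwards [hmem] with t ht
        refine Eventually.of_forall fun x => ?_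
        have h2 : |Real.exp (-(k * v t x)) - 1| ≤ 2 * |(-(k * v t x))| :=
          Real.abs_exp_sub_one_le (hsmall t ht x)
        rw [norm_mul, norm_mul, RCLike.norm_conj, Complex.norm_real, Real.norm_eq_abs]
        rw [abs_div, abs_of_pos ht.1]
        have hb : |Real.exp (-(k * v t x)) - 1| / t ≤ 2 * (k * C) := by
          rw [div_le_iff₀ ht.1]
          have ht1 : t ≤ 1 := le_trans ht.2 (min_le_left _ _)
          have hv1 : |v t x| ≤ C * t := hvb x t ⟨ht.1.le, ht1⟩
          calc |Real.exp (-(k * v t x)) - 1| ≤ 2 * |(-(k * v t x))| := h2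
            _ = 2 * (k * |v t x|) := by rw [abs_neg, abs_mul, abs_of_pos hk]
            _ ≤ 2 * (k * (C * t)) := by gcongr
            _ = 2 * (k * C) * t := by ring
        calc ‖f i x‖ * ‖f j x‖ * (|Real.exp (-(k * v t x)) - 1| / t)
            ≤ ‖f i x‖ * ‖f j x‖ * (2 * (k * C)) := by gcongr
          _ = 2 * (k * C) * (‖f i x‖ * ‖f j x‖) := by ring
      · refine ((hff i j).norm.const_mul (2 * (k * C))).congr
          (Eventually.of_forall fun x => ?_)
        simp [norm_mul, RCLike.norm_conj]
      · refine Eventually.of_forall fun x => ?_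
        have hr : Tendsto (fun t => (Real.exp (-(k * v t x)) - 1) / t)
            (𝓝[>] (0:ℝ)) (𝓝 (-(k * vdot x))) := by
          have h1 : Tendsto (fun t => (-k) * (v t x / t)) (𝓝[>] (0:ℝ))
              (𝓝 ((-k) * vdot x)) := (hvdot x).const_mul _
          have h2 : Tendsto (fun t => (Real.exp (-(k * v t x)) - 1 - (-(k * v t x))) / t)
              (𝓝[>] (0:ℝ)) (𝓝 0) := by
            apply squeeze_zero_norm' (a := fun t => k ^ 2 * C ^ 2 * t)
            · filter_upwards [hmem] with t ht
              have h3 := Real.abs_exp_sub_one_sub_id_le (hsmall t ht x)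
              have ht1 : t ≤ 1 := le_trans ht.2 (min_le_left _ _)
              have hv1 : |v t x| ≤ C * t := hvb x t ⟨ht.1.le, ht1⟩
              rw [Real.norm_eq_abs, abs_div, abs_of_pos ht.1, div_le_iff₀ ht.1]
              calc |Real.exp (-(k * v t x)) - 1 - -(k * v t x)|
                  ≤ (-(k * v t x)) ^ 2 := h3
                _ = |(-(k * v t x))| ^ 2 := (sq_abs _).symm
                _ ≤ (k * (C * t)) ^ 2 := by
                    apply pow_le_pow_left₀ (abs_nonneg _)
                    rw [abs_neg, abs_mul, abs_of_pos hk]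
                    gcongr
                _ ≤ k ^ 2 * C ^ 2 * t * t := by nlinarith [ht.1.le]
            · have : Tendsto (fun t : ℝ => k ^ 2 * C ^ 2 * t) (𝓝 0) (𝓝 0) := by
                exact (continuous_mul_left (k ^ 2 * C ^ 2)).tendsto' 0 0 (by simp)
              exact this.mono_left nhdsWithin_le_nhds
          have h4 := h1.add h2
          rw [add_zero] at h4
          refine Tendsto.congr (fun t => ?_) (by simpa [neg_mul] using h4)
          ring
        have := ((Complex.continuous_ofReal.tendsto _).comp hr).const_mul
          (f i x * conj (f j x))
        simpa [Function.comp] using this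
    refine hDCT.congr' ?_
    filter_upwards [hmem] with t ht
    have ht0 : (0:ℝ) < t := ht.1
    have ht1 : t ≤ 1 := le_trans ht.2 (min_le_left _ _)
    have htC : (t:ℂ) ≠ 0 := by exact_mod_cast ht0.ne'
    rw [slope_def_module, sub_zero, hH t, hH 0,
      ← integral_sub (hHint t ⟨ht0.le, ht1⟩ i j)
        (hHint 0 (Set.left_mem_Icc.2 zero_le_one) i j), ← integral_smul]
    refine integral_congr_ae (Eventually.of_forall fun x => ?_)
    simp only [hv0, mul_zero, neg_zero, Real.exp_zero, Complex.ofReal_one, mul_one]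
    rw [Complex.real_smul]
    push_cast
    field_simp
  -- derivative of the determinant
  have hcomb : (∑ σ : Equiv.Perm (Fin N), ((Equiv.Perm.sign σ : ℤ) : ℂ) *
      ∑ i, (∏ j ∈ Finset.univ.erase i, H 0 (σ j) j) • D (σ i) i) = ∑ i, D i i := by
    rw [Finset.sum_eq_single (1 : Equiv.Perm (Fin N))]
    · simp [hH0, Matrix.one_apply]
    · intro σ _ hσ
      obtain ⟨j0, hj0⟩ : ∃ j, σ j ≠ j := by
        by_contra hcon
        push_neg at hcon
        exact hσ (Equiv.ext hcon)
      rw [Finset.sum_eq_zero, mul_zero]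
      intro i _
      by_cases hcase : ∃ j ∈ Finset.univ.erase i, σ j ≠ j
      · obtain ⟨j, hjm, hj⟩ := hcase
        rw [Finset.prod_eq_zero hjm, zero_smul]
        rw [hH0]
        exact Matrix.one_apply_ne hj
      · push_neg at hcase
        exfalso
        have hfix : ∀ j, j ≠ i → σ j = j :=
          fun j hj => hcase j (Finset.mem_erase.2 ⟨hj, Finset.mem_univ j⟩)
        have hii : σ i = i := by
          by_contra hi
          exact hi (σ.injective (hfix (σ i) hi))
        refine hj0 ?_
        by_cases hji : j0 = i
        · rw [hji]; exact hii
        · exact hfix j0 hji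
    · intro h
      exact absurd (Finset.mem_univ _) h
  have hdet : HasDerivWithinAt (fun t => (H t).det) (∑ i, D i i) (Set.Ici 0) 0 := by
    have h1 : HasDerivWithinAt
        (fun t => ∑ σ : Equiv.Perm (Fin N), ((Equiv.Perm.sign σ : ℤ) : ℂ) * ∏ i, H t (σ i) i)
        (∑ σ : Equiv.Perm (Fin N), ((Equiv.Perm.sign σ : ℤ) : ℂ) *
          ∑ i, (∏ j ∈ Finset.univ.erase i, H 0 (σ j) j) • D (σ i) i) (Set.Ici 0) 0 := by
      apply HasDerivWithinAt.fun_sum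
      intro σ _
      exact (HasDerivWithinAt.fun_finsetProd fun i _ => hderiv_entry (σ i) i).const_mul _
    rw [hcomb] at h1
    refine h1.congr (fun t _ => Matrix.det_apply' (H t)) (Matrix.det_apply' (H 0))
  -- pass to the real part
  have hre : HasDerivWithinAt (fun t => ((H t).det).re) (∑ i, D i i).re (Set.Ici 0) 0 := by
    have h := Complex.reCLM.hasFDerivAt.comp_hasFDerivWithinAt (0:ℝ) hdet.hasFDerivWithinAt
    simpa [Function.comp_def] using h.hasDerivWithinAt
  -- value of the derivative
  have hDii : ∀ i, D i i = ((∫ x, ‖f i x‖ ^ 2 * (-(k * vdot x)) ∂μ : ℝ) : ℂ) := by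
    intro i
    rw [hDdef]
    refine Eq.trans (integral_congr_ae (Eventually.of_forall fun x => ?_)) integral_ofReal
    show f i x * conj (f i x) * ((-(k * vdot x) : ℝ) : ℂ)
        = ((‖f i x‖ ^ 2 * (-(k * vdot x)) : ℝ) : ℂ)
    rw [Complex.mul_conj, Complex.ofReal_mul]
    norm_cast
    simp [Complex.normSq_eq_norm_sq]
  have hintvd : ∀ i, Integrable (fun x => ‖f i x‖ ^ 2 * (-(k * vdot x))) μ := by
    intro i
    have h := (hsq i).bdd_mul (c := k * C)
      (((hvdotm.const_mul k).neg).aestronglyMeasurable)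
      (Eventually.of_forall fun x => by
        rw [Pi.neg_apply, Real.norm_eq_abs, abs_neg, abs_mul, abs_of_pos hk]
        exact mul_le_mul_of_nonneg_left (hvdotb x) hk.le)
    exact h.congr (Eventually.of_forall fun x => by simp only [Pi.neg_apply]; ring)
  have hval : (∑ i, D i i).re = -k * ∫ x, vdot x * ∑ j, ‖f j x‖ ^ 2 ∂μ := by
    rw [Complex.re_sum]
    have h1 : ∀ i : Fin N, (D i i).re = ∫ x, ‖f i x‖ ^ 2 * (-(k * vdot x)) ∂μ := by
      intro i
      rw [hDii i, Complex.ofReal_re]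
    simp_rw [h1]
    rw [← integral_finset_sum _ (fun i _ => hintvd i)]
    rw [show -k * ∫ x, vdot x * ∑ j, ‖f j x‖ ^ 2 ∂μ
        = ∫ x, (-k) * (vdot x * ∑ j, ‖f j x‖ ^ 2) ∂μ from (integral_const_mul _ _).symm]
    refine integral_congr_ae (Eventually.of_forall fun x => ?_)
    show (∑ i, ‖f i x‖ ^ 2 * -(k * vdot x)) = -k * (vdot x * ∑ j, ‖f j x‖ ^ 2)
    rw [← Finset.sum_mul]
    ring
  refine ⟨fun t ht => ⟨hpos t ht, ?_, ?_⟩, hH0, ?_⟩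
  · have h := (hpos t ht).det_pos
    rw [Complex.lt_def] at h
    exact h.2.symm
  · have h := (hpos t ht).det_pos
    rw [Complex.lt_def] at h
    simpa using h.1
  · have hval0 : ((H 0).det).re = 1 := by rw [hH0, Matrix.det_one, Complex.one_re]
    have hlog0 : HasDerivAt Real.log ((H 0).det.re)⁻¹ ((H 0).det.re) :=
      Real.hasDerivAt_log (by rw [hval0]; norm_num)
    have hcomp := hlog0.comp_hasDerivWithinAt (0:ℝ) hre
    simpa [Function.comp_def, hval0, hval] using hcomp
end

section
/- Let (Ω, Σ, μ) be a measure space, N ≥ 1, and let f₁,…,f_N : Ω → ℂ be measurable, square-integrable functions that are linearly independent in L²(μ) (no nontrivial complex linear combination of them vanishes μ-almost everywhere). Let g : Ω → ℝ be a bounded measurable function. For t ∈ ℝ let H(t) be the N×N complex matrix with entries H(t)_{ij} = ∫_Ω f_i \overline{f_j} e^{−t g} dμ. Then each H(t) is Hermitian positive definite (so det H(t) is a positive real number), and the real-valued function t ↦ log det H(t) is convex on ℝ. -/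
open MeasureTheory
open scoped ComplexConjugate ComplexOrder

private lemma stmt6_holder_aux {α : Type*} [MeasurableSpace α] {ν : Measure α}
    {u v m : α → ℝ} {a b : ℝ} (ha : 0 < a) (hb : 0 < b) (hab : a + b = 1)
    (hum : Measurable u) (hvm : Measurable v)
    (hu0 : ∀ x, 0 ≤ u x) (hv0 : ∀ x, 0 ≤ v x)
    (huint : Integrable u ν) (hvint : Integrable v ν) (hmint : Integrable m ν)
    (hm : ∀ x, m x = u x ^ a * v x ^ b) :
    ∫ x, m x ∂ν ≤ (∫ x, u x ∂ν) ^ a * (∫ x, v x ∂ν) ^ b := by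
  have hIu : 0 ≤ ∫ x, u x ∂ν := integral_nonneg hu0
  have hIv : 0 ≤ ∫ x, v x ∂ν := integral_nonneg hv0
  have hpq : (1/a).HolderConjugate (1/b) := by
    rw [Real.holderConjugate_iff]
    constructor
    · rw [lt_div_iff₀ ha]; linarith
    · rw [one_div, one_div, inv_inv, inv_inv]; exact hab
  have hUa : AEMeasurable (fun x => ENNReal.ofReal (u x) ^ a) ν :=
    (hum.ennreal_ofReal.pow_const _).aemeasurable
  have hVb : AEMeasurable (fun x => ENNReal.ofReal (v x) ^ b) ν :=
    (hvm.ennreal_ofReal.pow_const _).aemeasurable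
  have key := ENNReal.lintegral_mul_le_Lp_mul_Lq ν hpq hUa hVb
  have e1 : (∫⁻ x, ((fun x => ENNReal.ofReal (u x) ^ a) * fun x => ENNReal.ofReal (v x) ^ b) x ∂ν)
      = ENNReal.ofReal (∫ x, m x ∂ν) := by
    rw [ofReal_integral_eq_lintegral_ofReal hmint
      (Filter.Eventually.of_forall fun x => by
        rw [hm]
        exact mul_nonneg (Real.rpow_nonneg (hu0 x) a) (Real.rpow_nonneg (hv0 x) b))]
    refine lintegral_congr fun x => ?_
    simp only [Pi.mul_apply]
    rw [ENNReal.ofReal_rpow_of_nonneg (hu0 x) ha.le, ENNReal.ofReal_rpow_of_nonneg (hv0 x) hb.le,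
      ← ENNReal.ofReal_mul (Real.rpow_nonneg (hu0 x) a), hm]
  have e2 : (∫⁻ x, (ENNReal.ofReal (u x) ^ a) ^ (1/a) ∂ν) = ENNReal.ofReal (∫ x, u x ∂ν) := by
    simp_rw [← ENNReal.rpow_mul, mul_one_div_cancel ha.ne', ENNReal.rpow_one]
    exact (ofReal_integral_eq_lintegral_ofReal huint (Filter.Eventually.of_forall hu0)).symm
  have e3 : (∫⁻ x, (ENNReal.ofReal (v x) ^ b) ^ (1/b) ∂ν) = ENNReal.ofReal (∫ x, v x ∂ν) := by
    simp_rw [← ENNReal.rpow_mul, mul_one_div_cancel hb.ne', ENNReal.rpow_one]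
    exact (ofReal_integral_eq_lintegral_ofReal hvint (Filter.Eventually.of_forall hv0)).symm
  rw [e1, e2, e3, one_div_one_div, one_div_one_div,
    ENNReal.ofReal_rpow_of_nonneg hIu ha.le, ENNReal.ofReal_rpow_of_nonneg hIv hb.le,
    ← ENNReal.ofReal_mul (by positivity)] at key
  exact (ENNReal.ofReal_le_ofReal_iff (by positivity)).mp key

private lemma stmt6_sf_aux {Ω : Type*} [MeasurableSpace Ω] (μ : Measure Ω)
    {φ : Ω → ℝ} (hφm : Measurable φ) (hφi : Integrable φ μ) :
    SigmaFinite (μ.restrict {x | 0 < φ x}) := by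
  have hSm : MeasurableSet {x | 0 < φ x} := measurableSet_lt measurable_const hφm
  refine ⟨⟨⟨fun n => {x | 0 < φ x}ᶜ ∪ {x | 1/((n:ℝ)+1) ≤ φ x}, fun _ => trivial, fun n => ?_, ?_⟩⟩⟩
  · rw [Measure.restrict_apply' hSm]
    refine lt_of_le_of_lt (measure_mono ?_)
      (hφi.measure_ge_lt_top (ε := 1/((n:ℝ)+1)) (by positivity))
    rintro x ⟨h | h, hx2⟩
    · exact absurd hx2 h
    · exact h
  · apply Set.eq_univ_of_forall
    intro x
    by_cases hx : 0 < φ x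
    · obtain ⟨n, hn⟩ := exists_nat_one_div_lt hx
      exact Set.mem_iUnion.2 ⟨n, Or.inr hn.le⟩
    · exact Set.mem_iUnion.2 ⟨0, Or.inl hx⟩

/-- Convexity of `t ↦ log det H t` for the weighted Gram matrices
`H t` with entries `∫ fᵢ conj fⱼ e^{−t g} dμ`, where `f₁, …, f_N` are square-integrable
and linearly independent in `L²(μ)` and `g` is bounded measurable; moreover each `H t`
is Hermitian positive definite with positive real determinant. -/
theorem stmt6 {Ω : Type*} [MeasurableSpace Ω] (μ : Measure Ω)
    (N : ℕ) (hN : 1 ≤ N) (f : Fin N → Ω → ℂ)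
    (hfm : ∀ j, Measurable (f j)) (hfL2 : ∀ j, MemLp (f j) 2 μ)
    (hind : ∀ c : Fin N → ℂ, (∀ᵐ x ∂μ, (∑ j, c j * f j x) = 0) → c = 0)
    (g : Ω → ℝ) (hgm : Measurable g) (M : ℝ) (hgb : ∀ x, |g x| ≤ M)
    (H : ℝ → Matrix (Fin N) (Fin N) ℂ)
    (hH : ∀ t i j, H t i j
        = ∫ x, f i x * conj (f j x) * (Real.exp (-(t * g x)) : ℂ) ∂μ) :
    (∀ t : ℝ, (H t).PosDef ∧ (H t).det.im = 0 ∧ 0 < (H t).det.re) ∧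
    ConvexOn ℝ Set.univ (fun t => Real.log ((H t).det.re)) := by
  classical
  -- boundedness of the weight
  have hgM : ∀ (t : ℝ) x, Real.exp (-(t * g x)) ≤ Real.exp (|t| * M) := by
    intro t x
    apply Real.exp_le_exp.2
    calc -(t * g x) ≤ |t * g x| := neg_le_abs _
      _ = |t| * |g x| := abs_mul _ _
      _ ≤ |t| * M := mul_le_mul_of_nonneg_left (hgb x) (abs_nonneg t)
  have hexpm : ∀ t : ℝ, Measurable (fun x => Real.exp (-(t * g x))) := fun t =>
    Real.measurable_exp.comp ((hgm.const_mul t).neg)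
  -- products of two L² functions are integrable
  have hconj2 : ∀ j, MemLp (fun x => conj (f j x)) 2 μ := by
    intro j
    refine (hfL2 j).of_le_mul (c := 1)
      ((RCLike.continuous_conj (K := ℂ)).comp_aestronglyMeasurable (hfL2 j).1)
      (Filter.Eventually.of_forall fun x => ?_)
    simp [RCLike.norm_conj]
  have hmul : ∀ i j, Integrable (fun x => f i x * conj (f j x)) μ := by
    intro i j
    have h13 : (1 : ENNReal)/1 = 1/2 + 1/2 := by
      rw [ENNReal.div_add_div_same, one_add_one_eq_two,
        ENNReal.div_self two_ne_zero ENNReal.ofNat_ne_top, one_div_one]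
    have h' := memLp_one_iff_integrable.mp ((hconj2 j).smul (hfL2 i) (r := 1))
    exact h'
  have hJ : ∀ (t : ℝ) i j,
      Integrable (fun x => f i x * conj (f j x) * (Real.exp (-(t * g x)) : ℂ)) μ := by
    intro t i j
    have h1 : Integrable
        (fun x => (Real.exp (-(t * g x)) : ℂ) * (f i x * conj (f j x))) μ := by
      refine (hmul i j).bdd_mul (c := Real.exp (|t| * M))
        ((Complex.measurable_ofReal.comp (hexpm t)).aestronglyMeasurable)
        (Filter.Eventually.of_forall fun x => ?_)
      rw [Complex.norm_real, Real.norm_eq_abs, abs_of_pos (Real.exp_pos _)]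
      exact hgM t x
    exact h1.congr (Filter.Eventually.of_forall fun x => by ring)
  -- the quadratic form of `H t`
  have hquad : ∀ (t : ℝ) (c : Fin N → ℂ), dotProduct (star c) ((H t).mulVec c) =
      ((∫ x, Complex.normSq (∑ i, conj (c i) * f i x) * Real.exp (-(t * g x)) ∂μ : ℝ) : ℂ) := by
    intro t c
    have h1 : dotProduct (star c) ((H t).mulVec c)
        = ∑ i, ∑ j, ∫ x, (conj (c i) * c j) *
            (f i x * conj (f j x) * (Real.exp (-(t * g x)) : ℂ)) ∂μ := by
      simp only [dotProduct, Matrix.mulVec, Pi.star_apply]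
      refine Finset.sum_congr rfl fun i _ => ?_
      rw [Finset.mul_sum]
      refine Finset.sum_congr rfl fun j _ => ?_
      rw [hH, integral_const_mul, Complex.star_def]
      ring
    rw [h1]
    have h2 : ∀ i, Integrable (fun x => ∑ j, (conj (c i) * c j) *
        (f i x * conj (f j x) * (Real.exp (-(t * g x)) : ℂ))) μ :=
      fun i => integrable_finset_sum _ fun j _ => (hJ t i j).const_mul _
    rw [Finset.sum_congr rfl fun i (_ : i ∈ Finset.univ) =>
      (integral_finset_sum Finset.univ fun j _ => (hJ t i j).const_mul _).symm,
      ← integral_finset_sum _ fun i _ => h2 i]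
    refine (integral_congr_ae (Filter.Eventually.of_forall fun x => ?_)).trans integral_ofReal
    have hpt : ∑ i, ∑ j, (conj (c i) * c j) *
        (f i x * conj (f j x) * (Real.exp (-(t * g x)) : ℂ))
        = ((∑ i, conj (c i) * f i x) * conj (∑ i, conj (c i) * f i x))
            * (Real.exp (-(t * g x)) : ℂ) := by
      rw [map_sum, Finset.sum_mul_sum, Finset.sum_mul]
      refine Finset.sum_congr rfl fun i _ => ?_
      rw [Finset.sum_mul]
      refine Finset.sum_congr rfl fun j _ => ?_
      simp only [map_mul, Complex.conj_conj]
      ring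
    rw [hpt, Complex.mul_conj, ← Complex.ofReal_mul]
    norm_cast
  -- positivity of the quadratic form
  have hpos : ∀ (t : ℝ) (c : Fin N → ℂ), c ≠ 0 →
      0 < ∫ x, Complex.normSq (∑ i, conj (c i) * f i x) * Real.exp (-(t * g x)) ∂μ := by
    intro t c hc
    set F : Ω → ℂ := fun x => ∑ i, conj (c i) * f i x with hF
    have hFm2 : MemLp F 2 μ :=
      memLp_finset_sum _ fun i _ => (hfL2 i).const_mul (conj (c i))
    have hnsq : Integrable (fun x => Complex.normSq (F x)) μ := by
      have h1 := (memLp_two_iff_integrable_sq_norm hFm2.1).mp hFm2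
      simpa [Complex.sq_norm] using h1
    have hRint : Integrable (fun x => Complex.normSq (F x) * Real.exp (-(t * g x))) μ := by
      have h1 : Integrable (fun x => Real.exp (-(t * g x)) * Complex.normSq (F x)) μ :=
        hnsq.bdd_mul (c := Real.exp (|t| * M)) (hexpm t).aestronglyMeasurable
          (Filter.Eventually.of_forall fun x => by
            rw [Real.norm_eq_abs, abs_of_pos (Real.exp_pos _)]; exact hgM t x)
      exact h1.congr (Filter.Eventually.of_forall fun x => by ring)
    have hRnn : 0 ≤ fun x => Complex.normSq (F x) * Real.exp (-(t * g x)) := fun x =>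
      mul_nonneg (Complex.normSq_nonneg _) (Real.exp_pos _).le
    rcases (integral_nonneg hRnn).lt_or_eq with h | h
    · exact h
    · exfalso
      have hz := (integral_eq_zero_iff_of_nonneg hRnn hRint).mp h.symm
      have hF0 : ∀ᵐ x ∂μ, (∑ j, conj (c j) * f j x) = 0 := by
        filter_upwards [hz] with x hx
        have : Complex.normSq (F x) * Real.exp (-(t * g x)) = 0 := hx
        have h2 : Complex.normSq (F x) = 0 := by
          rcases mul_eq_zero.mp this with h' | h'
          · exact h'
          · exact absurd h' (Real.exp_pos _).ne'
        exact Complex.normSq_eq_zero.mp h2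
      have := hind (fun i => conj (c i)) hF0
      apply hc
      funext i
      have := congrFun this i
      simpa using congrArg conj this
  -- positive definiteness
  have hPD : ∀ t, (H t).PosDef := by
    intro t
    rw [Matrix.posDef_iff_dotProduct_mulVec]
    constructor
    · ext i j
      rw [Matrix.conjTranspose_apply, hH, hH, Complex.star_def, ← integral_conj]
      refine integral_congr_ae (Filter.Eventually.of_forall fun x => ?_)
      simp only [map_mul, Complex.conj_conj, Complex.conj_ofReal]
      ring
    · intro c hc
      rw [hquad t c]
      exact Complex.zero_lt_real.mpr (hpos t c hc)
  have hdet : ∀ t, (H t).det.im = 0 ∧ 0 < (H t).det.re := by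
    intro t
    have h := (hPD t).det_pos
    rw [Complex.lt_def] at h
    exact ⟨h.2.symm.trans Complex.zero_im, by simpa using h.1⟩
  refine ⟨fun t => ⟨hPD t, (hdet t).1, (hdet t).2⟩, ?_⟩
  -- ## Convexity via the Andréief identity
  -- restrict to a σ-finite part of μ carrying all the fᵢ
  set φ₀ : Ω → ℝ := fun x => ∑ i, Complex.normSq (f i x) with hφ₀
  have hφm : Measurable φ₀ :=
    Finset.measurable_sum _ fun i _ => Complex.continuous_normSq.measurable.comp (hfm i)
  have hφi : Integrable φ₀ μ := by
    apply integrable_finset_sum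
    intro i _
    have h1 := (memLp_two_iff_integrable_sq_norm (hfL2 i).1).mp (hfL2 i)
    simpa [Complex.sq_norm] using h1
  have hfS : ∀ x, x ∉ {y | 0 < φ₀ y} → ∀ i, f i x = 0 := by
    intro x hx i
    have h0 : φ₀ x ≤ 0 := not_lt.mp hx
    have hnn : ∀ j ∈ Finset.univ, (0:ℝ) ≤ Complex.normSq (f j x) :=
      fun j _ => Complex.normSq_nonneg _
    have hz : φ₀ x = 0 := le_antisymm h0 (Finset.sum_nonneg hnn)
    exact Complex.normSq_eq_zero.mp
      ((Finset.sum_eq_zero_iff_of_nonneg hnn).mp hz i (Finset.mem_univ i))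
  letI : MeasureSpace Ω := ⟨μ.restrict {y | 0 < φ₀ y}⟩
  haveI hSF : SigmaFinite (volume : Measure Ω) := stmt6_sf_aux μ hφm hφi
  have hHν : ∀ (r : ℝ) (i j : Fin N), H r i j
      = ∫ x, f i x * conj (f j x) * (Real.exp (-(r * g x)) : ℂ) := by
    intro r i j
    rw [hH]
    exact (setIntegral_eq_integral_of_forall_compl_eq_zero fun x hx => by
      simp [hfS x hx i]).symm
  have hJν : ∀ (r : ℝ) (i j : Fin N),
      Integrable (fun x => f i x * conj (f j x) * (Real.exp (-(r * g x)) : ℂ))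
        (volume : Measure Ω) := fun r i j => (hJ r i j).restrict
  -- the determinant as an integral over the product space
  set D : (Fin N → Ω) → ℂ := fun x => Matrix.det (Matrix.of fun k i => f k (x i)) with hDdef
  have hDeq : ∀ x : Fin N → Ω, D x = ∑ σ : Equiv.Perm (Fin N),
      ((Equiv.Perm.sign σ : ℤ) : ℂ) * ∏ i, f (σ i) (x i) := by
    intro x
    simp only [hDdef]
    rw [Matrix.det_apply']
    exact Finset.sum_congr rfl fun σ _ => by simp [Matrix.of_apply]
  have hDm : Measurable D := by
    rw [show D = fun x : Fin N → Ω => ∑ σ : Equiv.Perm (Fin N),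
        ((Equiv.Perm.sign σ : ℤ) : ℂ) * ∏ i, f (σ i) (x i) from funext hDeq]
    refine Finset.measurable_sum _ fun σ _ => ?_
    exact (Finset.measurable_prod _ fun i _ =>
      (hfm (σ i)).comp (measurable_pi_apply i)).const_mul _
  set ρ : ℝ → (Fin N → Ω) → ℝ :=
    fun r x => Complex.normSq (D x) * ∏ i, Real.exp (-(r * g (x i))) with hρdef
  have hρm : ∀ r, Measurable (ρ r) := by
    intro r
    exact (Complex.continuous_normSq.measurable.comp hDm).mul
      (Finset.measurable_prod _ fun i _ =>
        (Real.measurable_exp.comp (((hgm.comp (measurable_pi_apply i)).const_mul r).neg)))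
  have hρnn : ∀ r (x : Fin N → Ω), 0 ≤ ρ r x := fun r x =>
    mul_nonneg (Complex.normSq_nonneg _) (Finset.prod_nonneg fun i _ => (Real.exp_pos _).le)
  set Φ : ℝ → (Fin N → Ω) → ℂ := fun r x => ∑ σ : Equiv.Perm (Fin N),
      ((Equiv.Perm.sign σ : ℤ) : ℂ) *
        ∏ i, (f (σ i) (x i) * conj (f i (x i)) * (Real.exp (-(r * g (x i))) : ℂ)) with hΦdef
  have hΦint : ∀ r, Integrable (Φ r) (volume : Measure (Fin N → Ω)) := by
    intro r
    apply integrable_finset_sum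
    intro σ _
    exact (Integrable.fintype_prod
      (f := fun i y => f (σ i) y * conj (f i y) * (Real.exp (-(r * g y)) : ℂ))
      fun i => hJν r (σ i) i).const_mul _
  have hdetΦ : ∀ r, (H r).det = ∫ x : Fin N → Ω, Φ r x := by
    intro r
    rw [Matrix.det_apply']
    have h1 : ∀ σ : Equiv.Perm (Fin N), ∏ i, H r (σ i) i
        = ∫ x : Fin N → Ω,
            ∏ i, (f (σ i) (x i) * conj (f i (x i)) * (Real.exp (-(r * g (x i))) : ℂ)) := by
      intro σ
      simp_rw [hHν r]
      exact (integral_fintype_prod_volume_eq_prod (ι := Fin N)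
        (fun i y => f (σ i) y * conj (f i y) * (Real.exp (-(r * g y)) : ℂ))).symm
    calc ∑ σ : Equiv.Perm (Fin N), ((Equiv.Perm.sign σ : ℤ) : ℂ) * ∏ i, H r (σ i) i
        = ∑ σ : Equiv.Perm (Fin N), ∫ x : Fin N → Ω, ((Equiv.Perm.sign σ : ℤ) : ℂ) *
            ∏ i, (f (σ i) (x i) * conj (f i (x i)) * (Real.exp (-(r * g (x i))) : ℂ)) := by
          refine Finset.sum_congr rfl fun σ _ => ?_
          rw [h1 σ, integral_const_mul]
      _ = ∫ x : Fin N → Ω, Φ r x := by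
          rw [← integral_finset_sum]
          intro σ _
          exact (Integrable.fintype_prod
            (f := fun i y => f (σ i) y * conj (f i y) * (Real.exp (-(r * g y)) : ℂ))
            fun i => hJν r (σ i) i).const_mul _
  -- permutation invariance
  have hfunτ : ∀ (τ : Equiv.Perm (Fin N)) (x : Fin N → Ω),
      (MeasurableEquiv.arrowCongr' (τ.symm : Fin N ≃ Fin N) (MeasurableEquiv.refl Ω)) x
        = fun i => x (τ i) := by
    intro τ x
    funext i
    simp [MeasurableEquiv.arrowCongr', Equiv.arrowCongr', Equiv.arrowCongr]
  have hmp : ∀ τ : Equiv.Perm (Fin N),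
      MeasurePreserving (MeasurableEquiv.arrowCongr' (τ.symm : Fin N ≃ Fin N)
        (MeasurableEquiv.refl Ω)) volume volume := by
    intro τ
    refine volume_preserving_arrowCongr' _ _ ?_
    exact MeasurePreserving.id (volume : Measure Ω)
  have hcompInt : ∀ (r : ℝ) (τ : Equiv.Perm (Fin N)),
      Integrable (fun x : Fin N → Ω => Φ r (fun i => x (τ i)))
        (volume : Measure (Fin N → Ω)) := by
    intro r τ
    have h1 := ((hmp τ).integrable_comp_emb
      (MeasurableEquiv.measurableEmbedding _)).mpr (hΦint r)
    refine h1.congr (Filter.Eventually.of_forall fun x => ?_)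
    rw [Function.comp_apply, hfunτ]
  have hcompEq : ∀ (r : ℝ) (τ : Equiv.Perm (Fin N)),
      (∫ x : Fin N → Ω, Φ r (fun i => x (τ i))) = ∫ x : Fin N → Ω, Φ r x := by
    intro r τ
    refine Eq.trans ?_ ((hmp τ).integral_comp' (Φ r))
    refine integral_congr_ae (Filter.Eventually.of_forall fun x => ?_)
    dsimp only
    rw [hfunτ]
  -- symmetrization
  have hΦfact : ∀ (r : ℝ) (y : Fin N → Ω),
      Φ r y = D y * conj (∏ i, f i (y i)) * ∏ i, (Real.exp (-(r * g (y i))) : ℂ) := by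
    intro r y
    simp only [hΦdef]
    calc ∑ σ : Equiv.Perm (Fin N), ((Equiv.Perm.sign σ : ℤ) : ℂ) *
          ∏ i, (f (σ i) (y i) * conj (f i (y i)) * (Real.exp (-(r * g (y i))) : ℂ))
        = ∑ σ : Equiv.Perm (Fin N), (((Equiv.Perm.sign σ : ℤ) : ℂ) * ∏ i, f (σ i) (y i)) *
            ((∏ i, conj (f i (y i))) * ∏ i, (Real.exp (-(r * g (y i))) : ℂ)) := by
          refine Finset.sum_congr rfl fun σ _ => ?_
          rw [Finset.prod_mul_distrib, Finset.prod_mul_distrib]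
          ring
      _ = D y * conj (∏ i, f i (y i)) * ∏ i, (Real.exp (-(r * g (y i))) : ℂ) := by
          rw [← Finset.sum_mul, ← hDeq y, map_prod]
          ring
  have hDτ : ∀ (τ : Equiv.Perm (Fin N)) (x : Fin N → Ω),
      D (fun i => x (τ i)) = ((Equiv.Perm.sign τ : ℤ) : ℂ) * D x := by
    intro τ x
    have h1 : (Matrix.of fun k i => f k (x (τ i)))
        = (Matrix.of fun k i => f k (x i)).submatrix id τ := by
      ext k i
      simp [Matrix.submatrix_apply]
    simp only [hDdef]
    rw [h1, Matrix.det_permute']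
  have hDalt : ∀ x : Fin N → Ω, (∑ τ : Equiv.Perm (Fin N),
      ((Equiv.Perm.sign τ : ℤ) : ℂ) * ∏ i, f i (x (τ i))) = D x := by
    intro x
    have h1 : D x = ((Matrix.of fun k i => f k (x i)).transpose).det :=
      (Matrix.det_transpose _).symm
    rw [h1, Matrix.det_apply']
    refine Finset.sum_congr rfl fun σ _ => ?_
    congr 1
  have hsym : ∀ (r : ℝ) (x : Fin N → Ω),
      (∑ τ : Equiv.Perm (Fin N), Φ r (fun i => x (τ i))) = ((ρ r x : ℝ) : ℂ) := by
    intro r x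
    have hW : ∀ τ : Equiv.Perm (Fin N),
        (∏ i, (Real.exp (-(r * g (x (τ i)))) : ℂ)) = ∏ i, (Real.exp (-(r * g (x i))) : ℂ) :=
      fun τ => Equiv.prod_comp τ (fun j => (Real.exp (-(r * g (x j))) : ℂ))
    calc ∑ τ : Equiv.Perm (Fin N), Φ r (fun i => x (τ i))
        = ∑ τ : Equiv.Perm (Fin N), (D x * ∏ i, (Real.exp (-(r * g (x i))) : ℂ)) *
            conj (((Equiv.Perm.sign τ : ℤ) : ℂ) * ∏ i, f i (x (τ i))) := by
          refine Finset.sum_congr rfl fun τ _ => ?_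
          rw [hΦfact r, hDτ τ x, hW τ, map_mul, map_intCast]
          ring
      _ = (D x * ∏ i, (Real.exp (-(r * g (x i))) : ℂ)) *
            conj (∑ τ : Equiv.Perm (Fin N),
              ((Equiv.Perm.sign τ : ℤ) : ℂ) * ∏ i, f i (x (τ i))) := by
          rw [← Finset.mul_sum, map_sum]
      _ = ((ρ r x : ℝ) : ℂ) := by
          rw [hDalt x]
          simp only [hρdef]
          rw [Complex.ofReal_mul, Complex.ofReal_prod, ← Complex.mul_conj]
          ring
  -- the Andréief identity
  have hkey : ∀ r : ℝ, Integrable (ρ r) (volume : Measure (Fin N → Ω)) ∧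
      (N.factorial : ℝ) * (H r).det.re = ∫ x : Fin N → Ω, ρ r x := by
    intro r
    have hsum_int : Integrable (fun x : Fin N → Ω =>
        ∑ τ : Equiv.Perm (Fin N), Φ r (fun i => x (τ i))) (volume : Measure (Fin N → Ω)) :=
      integrable_finset_sum _ fun τ _ => hcompInt r τ
    have hρint : Integrable (ρ r) (volume : Measure (Fin N → Ω)) := by
      have h1 : Integrable (fun x : Fin N → Ω => ((ρ r x : ℝ) : ℂ))
          (volume : Measure (Fin N → Ω)) :=
        hsum_int.congr (Filter.Eventually.of_forall (hsym r))
      simpa using h1.re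
    have hC : ((N.factorial : ℂ)) * (H r).det = ((∫ x : Fin N → Ω, ρ r x : ℝ) : ℂ) := by
      calc ((N.factorial : ℂ)) * (H r).det
          = ∑ _τ : Equiv.Perm (Fin N), (H r).det := by
            rw [Finset.sum_const, Finset.card_univ, Fintype.card_perm, Fintype.card_fin,
              nsmul_eq_mul]
        _ = ∑ τ : Equiv.Perm (Fin N), ∫ x : Fin N → Ω, Φ r (fun i => x (τ i)) := by
            refine Finset.sum_congr rfl fun τ _ => ?_
            rw [hdetΦ r]
            exact (hcompEq r τ).symm
        _ = ∫ x : Fin N → Ω, ∑ τ : Equiv.Perm (Fin N), Φ r (fun i => x (τ i)) :=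
            (integral_finset_sum _ fun τ _ => hcompInt r τ).symm
        _ = ∫ x : Fin N → Ω, ((ρ r x : ℝ) : ℂ) :=
            integral_congr_ae (Filter.Eventually.of_forall (hsym r))
        _ = ((∫ x : Fin N → Ω, ρ r x : ℝ) : ℂ) := integral_ofReal
    refine ⟨hρint, ?_⟩
    have h2 := congrArg Complex.re hC
    simpa [Complex.mul_re, Complex.natCast_re, Complex.natCast_im] using h2
  have hψpos : ∀ r : ℝ, 0 < ∫ x : Fin N → Ω, ρ r x := by
    intro r
    rw [← (hkey r).2]
    exact mul_pos (by exact_mod_cast Nat.factorial_pos N) (hdet r).2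
  have hfac0 : (0:ℝ) < (N.factorial : ℝ) := by exact_mod_cast Nat.factorial_pos N
  have hlogeq : ∀ r : ℝ, Real.log ((H r).det.re)
      = Real.log (∫ x : Fin N → Ω, ρ r x) - Real.log (N.factorial : ℝ) := by
    intro r
    rw [← (hkey r).2, Real.log_mul hfac0.ne' (hdet r).2.ne']
    ring
  -- pointwise multiplicative combination of the densities
  have hcomb : ∀ (a b s u : ℝ), a + b = 1 → ∀ x : Fin N → Ω,
      ρ (a*s + b*u) x = ρ s x ^ a * ρ u x ^ b := by
    intro a b s u hab x
    have hW : ∀ r : ℝ, (∏ i, Real.exp (-(r * g (x i))))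
        = Real.exp (-(r * ∑ i, g (x i))) := by
      intro r
      rw [← Real.exp_sum]
      congr 1
      simp [Finset.mul_sum]
    have hne : a + b ≠ 0 := by rw [hab]; norm_num
    simp only [hρdef]
    rw [hW, hW, hW, Real.mul_rpow (Complex.normSq_nonneg _) (Real.exp_pos _).le,
      Real.mul_rpow (Complex.normSq_nonneg _) (Real.exp_pos _).le,
      ← Real.exp_mul, ← Real.exp_mul, mul_mul_mul_comm,
      ← Real.rpow_add' (Complex.normSq_nonneg _) hne, hab, Real.rpow_one, ← Real.exp_add]
    congr 1
    congr 1
    ring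
  -- conclude convexity
  refine ⟨convex_univ, ?_⟩
  intro s _ u _ a b ha hb hab
  simp only [smul_eq_mul]
  by_cases ha0 : a = 0
  · subst ha0
    have hb1 : b = 1 := by linarith
    subst hb1
    simp
  by_cases hb0 : b = 0
  · subst hb0
    have ha1 : a = 1 := by linarith
    subst ha1
    simp
  have ha' : 0 < a := lt_of_le_of_ne ha (Ne.symm ha0)
  have hb' : 0 < b := lt_of_le_of_ne hb (Ne.symm hb0)
  have hHol := stmt6_holder_aux ha' hb' hab (hρm s) (hρm u) (hρnn s) (hρnn u)
      (hkey s).1 (hkey u).1 (hkey (a*s+b*u)).1 (hcomb a b s u hab)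
  have hlog2 : Real.log (∫ x : Fin N → Ω, ρ (a*s+b*u) x)
      ≤ a * Real.log (∫ x : Fin N → Ω, ρ s x) + b * Real.log (∫ x : Fin N → Ω, ρ u x) := by
    calc Real.log (∫ x : Fin N → Ω, ρ (a*s+b*u) x)
        ≤ Real.log ((∫ x : Fin N → Ω, ρ s x) ^ a * (∫ x : Fin N → Ω, ρ u x) ^ b) :=
          Real.log_le_log (hψpos _) hHol
      _ = a * Real.log (∫ x : Fin N → Ω, ρ s x) + b * Real.log (∫ x : Fin N → Ω, ρ u x) := by
          rw [Real.log_mul (Real.rpow_pos_of_pos (hψpos s) a).ne'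
            (Real.rpow_pos_of_pos (hψpos u) b).ne', Real.log_rpow (hψpos s),
            Real.log_rpow (hψpos u)]
  rw [hlogeq, hlogeq, hlogeq]
  have hcc : a * Real.log (N.factorial : ℝ) + b * Real.log (N.factorial : ℝ)
      = Real.log (N.factorial : ℝ) := by
    rw [← add_mul, hab, one_mul]
  linarith [hlog2, hcc]
end
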